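/- Let b ∈ Γ and let n be an integer with 3 ≤ n ≤ rk(b). If the comparability graph of Γ_{b,3} (vertex set Γ_{b,3}, with an edge between distinct a, a′ whenever a < a′ or a′ < a) is connected, then the comparability graph of Γ_{b,n} is connected. Equivalently, if Γ_{b,n} is disconnected for some n > 3 then Γ_{b,3} is disconnected. -/

import Mathlib

/-- A finite ranked poset: a partial order with a unique minimal element `star`
and a rank function `rk` such that `rk star = 0`, covering relations increase the
rank by exactly one, and `rk` is strictly monotone (for a finite poset this is
equivalent to: all maximal chains in `[star, x]` have the same length `rk x`). -/
structure RankedPoset (Γ : Type) [PartialOrder Γ] where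
  star : Γ
  rk : Γ → ℕ
  bot_le : ∀ x, star ≤ x
  rk_star : rk star = 0
  rk_covBy : ∀ ⦃x y : Γ⦄, x ⋖ y → rk y = rk x + 1
  rk_strictMono : StrictMono rk


/-- Membership in `Γ_{b,q} = {a | * < a < b and d(b,a) ≤ q - 1}`. -/
def memGbq {Γ : Type} [PartialOrder Γ] (R : RankedPoset Γ) (b : Γ) (q : ℕ) (a : Γ) : Prop :=
  R.star < a ∧ a < b ∧ R.rk b - R.rk a ≤ q - 1

/-- The comparability graph of a subset `S` of the poset `Γ`: vertices are the elements
of `S`, with an edge between distinct `a, a'` whenever `a < a'` or `a' < a`. -/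
def compGraph {Γ : Type} [PartialOrder Γ] (S : Γ → Prop) : SimpleGraph {a : Γ // S a} where
  Adj u v := u ≠ v ∧ (u.1 < v.1 ∨ v.1 < u.1)
  symm := ⟨fun u v h => ⟨h.1.symm, h.2.symm⟩⟩
  loopless := ⟨fun u h => h.1 rfl⟩

/-- If `S ⊆ T` and every element of `T` equals or is comparable to an element of `S`,
then connectivity of the comparability graph of `S` gives that of `T`. -/
def compGraphHom {Γ : Type} [PartialOrder Γ] (S T : Γ → Prop) (hST : ∀ a, S a → T a) :
    compGraph S →g compGraph T where
  toFun := fun a => ⟨a.1, hST a.1 a.2⟩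
  map_rel' := by
    intro u v h
    refine ⟨fun e => ?_, h.2⟩
    exact h.1 (Subtype.ext (Subtype.mk_eq_mk.mp e))

/-- If `S ⊆ T` and every element of `T` equals or is comparable to an element of `S`,
then connectivity of the comparability graph of `S` gives that of `T`. -/
lemma compGraph_connected_extend {Γ : Type} [PartialOrder Γ] (S T : Γ → Prop)
    (hST : ∀ a, S a → T a)
    (hcov : ∀ a, T a → ∃ a', S a' ∧ (a = a' ∨ a < a' ∨ a' < a))
    (hconn : (compGraph S).Connected) : (compGraph T).Connected := by
  set F := compGraphHom S T hST with hF
  have step : ∀ u : {a : Γ // T a}, ∃ u' : {a : Γ // S a},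
      (compGraph T).Reachable u (F u') := by
    rintro ⟨a, ha⟩
    obtain ⟨a', hS, hrel⟩ := hcov a ha
    refine ⟨⟨a', hS⟩, ?_⟩
    show (compGraph T).Reachable ⟨a, ha⟩ ⟨a', hST a' hS⟩
    rcases hrel with h | h
    · subst h
      exact SimpleGraph.Reachable.refl _
    · refine SimpleGraph.Adj.reachable ⟨fun e => ?_, h⟩
      have e' : a = a' := Subtype.mk_eq_mk.mp e
      rcases h with h | h
      · exact absurd e' (ne_of_lt h)
      · exact absurd e'.symm (ne_of_lt h)
  rw [SimpleGraph.connected_iff]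
  constructor
  · intro u v
    obtain ⟨u', hu⟩ := step u
    obtain ⟨v', hv⟩ := step v
    exact hu.trans (((hconn.preconnected u' v').map F).trans hv.symm)
  · obtain ⟨u⟩ := hconn.nonempty
    exact ⟨F u⟩

/-- For `b ∈ Γ` and `3 ≤ n ≤ rk b`: if the comparability graph of `Γ_{b,3}` is
connected, then the comparability graph of `Γ_{b,n}` is connected.  (Equivalently, if
`Γ_{b,n}` is disconnected for some `n > 3` then `Γ_{b,3}` is disconnected.) -/
theorem compGraph_connected_of_compGraph_three_connected
    {Γ : Type} [PartialOrder Γ] [Fintype Γ] (R : RankedPoset Γ)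
    (b : Γ) (n : ℕ) (h3 : 3 ≤ n) (hn : n ≤ R.rk b)
    (hconn : (compGraph (memGbq R b 3)).Connected) :
    (compGraph (memGbq R b n)).Connected := by
  clear hn
  induction n, h3 using Nat.le_induction with
  | base => exact hconn
  | succ q hq ih =>
    refine compGraph_connected_extend _ _ ?_ ?_ ih
    · rintro a ⟨h1, h2, h3⟩
      exact ⟨h1, h2, h3.trans (by omega)⟩
    · rintro a ⟨h1, h2, hd⟩
      by_cases hle : R.rk b - R.rk a ≤ q - 1
      · exact ⟨a, ⟨h1, h2, hle⟩, Or.inl rfl⟩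
      · have hlt : R.rk a < R.rk b := R.rk_strictMono h2
        have hex : ∃ c, a < c ∧ c < b := by
          by_contra hno
          push_neg at hno
          have hcov : a ⋖ b := ⟨h2, fun c hac hcb => hno c hac hcb⟩
          have := R.rk_covBy hcov
          omega
        obtain ⟨c, hac, hcb⟩ := hex
        have h4 : R.rk a < R.rk c := R.rk_strictMono hac
        have h5 : R.rk c < R.rk b := R.rk_strictMono hcb
        exact ⟨c, ⟨h1.trans hac, hcb, by omega⟩, Or.inr (Or.inl hac)⟩
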